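/- arXiv:2207.13563 — 2 statements merged into one kernel-verified Lean document; each statement's English description precedes it below -/
import Mathlib

section
/- Let f, g : ℂ × ℂ → ℂ be functions such that g is antisymmetric (g(x,y) = -g(y,x) for all x,y) and such that for all a, b, c, x ∈ ℂ one has g(b,c)f(x,a) + g(c,a)f(x,b) + g(a,b)f(x,c) = 0. Let (x_i)_{i∈ℕ} and (b_i)_{i∈ℕ} be sequences in ℂ with the b_i pairwise distinct, with g(b_i, b_j) ≠ 0 for all i ≠ j, and with f(x_i, b_j) ≠ 0 for all i, j. Define, for integers n ≥ k ≥ 0, f_{n,k} := (∏_{i=k}^{n-1} f(x_i, b_k)) / (∏_{i=k+1}^{n} g(b_i, b_k)) and g_{n,k} := (f(x_k, b_k)/f(x_n, b_n)) · (∏_{i=k+1}^{n} f(x_i, b_n)) / (∏_{i=k}^{n-1} g(b_i, b_n)) (empty products equal 1). Then for all n ≥ k ≥ 0: ∑_{i=k}^{n} f_{n,i} g_{i,k} = δ_{n,k} and ∑_{i=k}^{n} g_{n,i} f_{i,k} = δ_{n,k}, where δ_{n,k} is the Kronecker delta. -/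
open Finset

lemma fg_key (f g : ℂ × ℂ → ℂ) (hanti : ∀ x y : ℂ, g (x, y) = - g (y, x))
    (hfg : ∀ a b c x : ℂ, g (b, c) * f (x, a) + g (c, a) * f (x, b) + g (a, b) * f (x, c) = 0) :
    ∀ m k n : ℕ, n = k + m + 1 → ∀ a : ℕ → ℂ,
    (∀ i ∈ Finset.Icc k n, ∀ j ∈ Finset.Icc k n, j ≠ i → g (a j, a i) ≠ 0) →
    ∀ L : Multiset ℂ, Multiset.card L = m →
    ∑ i ∈ Finset.Icc k n, (L.map (fun z => f (z, a i))).prod /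
      ∏ j ∈ (Finset.Icc k n).erase i, g (a j, a i) = 0 := by
  have hzero : ∀ y : ℂ, g (y, y) = 0 := fun y => by linear_combination hanti y y / 2
  intro m
  induction m with
  | zero =>
    intro k n hn a hga L hL
    subst hn
    rw [Multiset.card_eq_zero] at hL
    subst hL
    have hne : k ≠ k + 0 + 1 := by omega
    have hset : Finset.Icc k (k + 0 + 1) = insert k ({k + 0 + 1} : Finset ℕ) := by
      ext j; simp; omega
    rw [hset, Finset.sum_insert (by simp [hne])]
    rw [Finset.erase_insert (by simp [hne])]
    have h2 : (insert k ({k + 0 + 1} : Finset ℕ)).erase (k + 0 + 1) = {k} := by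
      ext j; simp; omega
    simp only [Finset.sum_singleton, h2, Finset.prod_singleton, Multiset.map_zero,
      Multiset.prod_zero]
    rw [hanti (a k) (a (k + 0 + 1))]
    simp [div_neg]
  | succ m IH =>
    intro k n hn a hga L hL
    have hkn : k ∈ Finset.Icc k n := by simp; omega
    have hnn : n ∈ Finset.Icc k n := by simp; omega
    have hgkn : g (a k, a n) ≠ 0 := hga n hnn k hkn (by omega)
    obtain ⟨z, hz⟩ : ∃ z, z ∈ L := Multiset.exists_mem_of_ne_zero (by
      intro h; rw [h] at hL; simp at hL)
    obtain ⟨L', rfl⟩ := Multiset.exists_cons_of_mem hz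
    have hL' : Multiset.card L' = m := by simpa using hL
    set P : ℕ → ℂ := fun i => (L'.map (fun w => f (w, a i))).prod with hP
    set D : ℕ → ℂ := fun i => ∏ j ∈ (Finset.Icc k n).erase i, g (a j, a i) with hD
    have hdiv : ∀ (u p d : ℂ), u ≠ 0 → -u * p / (d * u) = -(p / d) := by
      intro u p d hu
      rw [mul_comm d u, neg_mul, neg_div, mul_div_mul_left p d hu]
    -- pointwise decomposition
    have hpt : ∀ i ∈ Finset.Icc k n,
        ((z ::ₘ L').map (fun w => f (w, a i))).prod / D i
        = (f (z, a k) / g (a k, a n)) * (g (a i, a n) * P i / D i)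
          - (f (z, a n) / g (a k, a n)) * (g (a i, a k) * P i / D i) := by
      intro i _
      rw [Multiset.map_cons, Multiset.prod_cons]
      have h3 : g (a k, a n) * f (z, a i)
          = g (a i, a n) * f (z, a k) - g (a i, a k) * f (z, a n) := by
        linear_combination hfg (a i) (a k) (a n) z - f (z, a k) * hanti (a n) (a i)
      have hfz : f (z, a i) = (g (a i, a n) * f (z, a k) - g (a i, a k) * f (z, a n))
          / g (a k, a n) := by
        rw [eq_div_iff hgkn]; linear_combination h3
      rw [hfz]; ring
    rw [Finset.sum_congr rfl hpt, Finset.sum_sub_distrib, ← Finset.mul_sum, ← Finset.mul_sum]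
    -- first inner sum vanishes
    have hA : ∑ i ∈ Finset.Icc k n, g (a i, a n) * P i / D i = 0 := by
      have hsplit : Finset.Icc k n = insert n (Finset.Icc k (k + m + 1)) := by
        ext j; simp; omega
      rw [hsplit, Finset.sum_insert (by simp; omega), hzero, zero_mul, zero_div, zero_add]
      have hterm : ∀ i ∈ Finset.Icc k (k + m + 1),
          g (a i, a n) * P i / D i
          = -(P i / ∏ j ∈ (Finset.Icc k (k + m + 1)).erase i, g (a j, a i)) := by
        intro i hi
        have hi' : i ∈ Finset.Icc k n := by simp at hi ⊢; omega
        have hne : n ∉ (Finset.Icc k (k + m + 1)).erase i := by simp; omega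
        have hDsplit : D i = g (a n, a i) *
            ∏ j ∈ (Finset.Icc k (k + m + 1)).erase i, g (a j, a i) := by
          simp only [hD]
          have : (Finset.Icc k n).erase i = insert n ((Finset.Icc k (k + m + 1)).erase i) := by
            ext j; simp at hi ⊢; omega
          rw [this, Finset.prod_insert hne]
        have hgni : g (a n, a i) ≠ 0 := hga i hi' n hnn (by simp at hi; omega)
        rw [hDsplit, hanti (a i) (a n), mul_comm (g (a n, a i)) _, hdiv _ _ _ hgni]
      rw [Finset.sum_congr rfl hterm, Finset.sum_neg_distrib]
      rw [IH k (k + m + 1) (by omega) a (by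
        intro i hi j hj hne
        exact hga i (by simp at hi ⊢; omega) j (by simp at hj ⊢; omega) hne) L' hL']
      simp
    -- second inner sum vanishes
    have hB : ∑ i ∈ Finset.Icc k n, g (a i, a k) * P i / D i = 0 := by
      have hsplit : Finset.Icc k n = insert k (Finset.Icc (k + 1) n) := by
        ext j; simp; omega
      rw [hsplit, Finset.sum_insert (by simp), hzero, zero_mul, zero_div, zero_add]
      have hterm : ∀ i ∈ Finset.Icc (k + 1) n,
          g (a i, a k) * P i / D i
          = -(P i / ∏ j ∈ (Finset.Icc (k + 1) n).erase i, g (a j, a i)) := by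
        intro i hi
        have hi' : i ∈ Finset.Icc k n := by simp at hi ⊢; omega
        have hne : k ∉ (Finset.Icc (k + 1) n).erase i := by simp
        have hDsplit : D i = g (a k, a i) *
            ∏ j ∈ (Finset.Icc (k + 1) n).erase i, g (a j, a i) := by
          simp only [hD]
          have : (Finset.Icc k n).erase i = insert k ((Finset.Icc (k + 1) n).erase i) := by
            ext j; simp at hi ⊢; omega
          rw [this, Finset.prod_insert hne]
        have hgki : g (a k, a i) ≠ 0 := hga i hi' k hkn (by simp at hi; omega)
        rw [hDsplit, hanti (a i) (a k), mul_comm (g (a k, a i)) _, hdiv _ _ _ hgki]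
      rw [Finset.sum_congr rfl hterm, Finset.sum_neg_distrib]
      rw [IH (k + 1) n (by omega) a (by
        intro i hi j hj hne
        exact hga i (by simp at hi ⊢; omega) j (by simp at hj ⊢; omega) hne) L' hL']
      simp
    rw [hA, hB]; ring

lemma fg_prod_split (h : ℕ → ℂ) {k i n : ℕ} (hk : k ≤ i) (hin : i ≤ n) (hkn : k < n) :
    (∏ j ∈ Finset.Ico i n, h j) * (∏ j ∈ Finset.Ioc k i, h j)
      = h i * ∏ j ∈ Finset.Ioo k n, h j := by
  rw [← Finset.Ico_add_one_add_one_eq_Ioc, ← Finset.Ico_add_one_left_eq_Ioo]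
  rcases eq_or_lt_of_le hin with rfl | hlt
  · rw [Finset.Ico_self, Finset.prod_empty, one_mul,
      Finset.prod_Ico_succ_top (by omega : k + 1 ≤ i) h, mul_comm]
  · rw [Finset.prod_eq_prod_Ico_succ_bot hlt h, mul_assoc,
      mul_comm (∏ j ∈ Finset.Ico (i + 1) n, h j) (∏ j ∈ Finset.Ico (k + 1) (i + 1), h j),
      Finset.prod_Ico_consecutive h (by omega) (by omega)]

lemma fg_erase_split (h : ℕ → ℂ) {k i n : ℕ} (hk : k ≤ i) (hin : i ≤ n) :
    (∏ j ∈ Finset.Ioc i n, h j) * (∏ j ∈ Finset.Ico k i, h j)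
      = ∏ j ∈ (Finset.Icc k n).erase i, h j := by
  have hset : (Finset.Icc k n).erase i = Finset.Ico k i ∪ Finset.Ioc i n := by
    ext j; simp; omega
  rw [hset, Finset.prod_union (by
    rw [Finset.disjoint_left]; intro j hj hj2; simp at hj hj2; omega), mul_comm]

lemma fg_calc1 (A1 A2 B1 B2 c e N D : ℂ) (he : e ≠ 0)
    (h1 : A1 * B1 = e * N) (h2 : A2 * B2 = D) :
    (A1 / A2) * ((c / e) * B1 / B2) = c * (N / D) := by
  have h3 : (A1 / A2) * ((c / e) * B1 / B2) = c * (A1 * B1) / (e * (A2 * B2)) := by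
    field_simp
  rw [h3, h1, h2, show c * (e * N) = e * (c * N) by ring, mul_div_mul_left _ _ he,
    mul_div_assoc]

/-- The (f,g)-inversion formula: with `f_{n,k}` and `g_{n,k}` defined from sequences `x`, `b`
and functions `f, g` satisfying the three-term relation, the two matrices are inverse
lower-triangular matrices. -/
theorem fg_inversion
    (f g : ℂ × ℂ → ℂ)
    (hanti : ∀ x y : ℂ, g (x, y) = - g (y, x))
    (hfg : ∀ a b c x : ℂ,
      g (b, c) * f (x, a) + g (c, a) * f (x, b) + g (a, b) * f (x, c) = 0)
    (x b : ℕ → ℂ)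
    (hb : ∀ i j : ℕ, i ≠ j → b i ≠ b j)
    (hg : ∀ i j : ℕ, i ≠ j → g (b i, b j) ≠ 0)
    (hf : ∀ i j : ℕ, f (x i, b j) ≠ 0)
    (F G : ℕ → ℕ → ℂ)
    (hF : ∀ n k : ℕ, k ≤ n →
      F n k = (∏ i ∈ Finset.Ico k n, f (x i, b k)) /
        (∏ i ∈ Finset.Ioc k n, g (b i, b k)))
    (hG : ∀ n k : ℕ, k ≤ n →
      G n k = (f (x k, b k) / f (x n, b n)) *
        (∏ i ∈ Finset.Ioc k n, f (x i, b n)) /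
        (∏ i ∈ Finset.Ico k n, g (b i, b n))) :
    ∀ n k : ℕ, k ≤ n →
      ((∑ i ∈ Finset.Icc k n, F n i * G i k) = (if n = k then (1 : ℂ) else 0)) ∧
      ((∑ i ∈ Finset.Icc k n, G n i * F i k) = (if n = k then (1 : ℂ) else 0)) := by
  -- Part 1
  have part1 : ∀ n k : ℕ, k ≤ n →
      (∑ i ∈ Finset.Icc k n, F n i * G i k) = (if n = k then (1 : ℂ) else 0) := by
    intro n k hkn
    rcases eq_or_lt_of_le hkn with rfl | hlt
    · rw [if_pos rfl, Finset.Icc_self, Finset.sum_singleton, hF k k le_rfl, hG k k le_rfl]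
      simp [div_self (hf k k)]
    · rw [if_neg (by omega)]
      have hpt : ∀ i ∈ Finset.Icc k n, F n i * G i k
          = f (x k, b k) * ((∏ j ∈ Finset.Ioo k n, f (x j, b i)) /
              ∏ j ∈ (Finset.Icc k n).erase i, g (b j, b i)) := by
        intro i hi
        simp only [Finset.mem_Icc] at hi
        rw [hF n i hi.2, hG i k hi.1]
        exact fg_calc1 _ _ _ _ _ _ _ _ (hf i i)
          (fg_prod_split (fun j => f (x j, b i)) hi.1 hi.2 hlt)
          (fg_erase_split (fun j => g (b j, b i)) hi.1 hi.2)
      rw [Finset.sum_congr rfl hpt, ← Finset.mul_sum]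
      have hkey := fg_key f g hanti hfg (n - k - 1) k n (by omega) b
        (fun i _ j _ hne => hg j i hne) ((Finset.Ioo k n).val.map x)
        (by rw [Multiset.card_map]; exact Nat.card_Ioo k n)
      have heq : ∀ i ∈ Finset.Icc k n,
          (((Finset.Ioo k n).val.map x).map (fun z => f (z, b i))).prod /
            ∏ j ∈ (Finset.Icc k n).erase i, g (b j, b i)
          = (∏ j ∈ Finset.Ioo k n, f (x j, b i)) /
            ∏ j ∈ (Finset.Icc k n).erase i, g (b j, b i) := by
        intro i _
        rw [Multiset.map_map]
        rfl
      rw [Finset.sum_congr rfl heq] at hkey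
      rw [hkey, mul_zero]
  -- Part 2 via finite matrix inversion
  have part2 : ∀ n k : ℕ, k ≤ n →
      (∑ i ∈ Finset.Icc k n, G n i * F i k) = (if n = k then (1 : ℂ) else 0) := by
    intro n k hkn
    have hconv : ∀ (H K : ℕ → ℕ → ℂ) (p q : Fin (n + 1)), (q : ℕ) ≤ (p : ℕ) →
        (∑ r : Fin (n + 1), (if (r : ℕ) ≤ (p : ℕ) then H p r else 0) *
          (if (q : ℕ) ≤ (r : ℕ) then K r q else 0))
        = ∑ i ∈ Finset.Icc (q : ℕ) (p : ℕ), H p i * K i q := by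
      intro H K p q hqp
      rw [Fin.sum_univ_eq_sum_range (fun r =>
        (if r ≤ (p : ℕ) then H p r else 0) * (if (q : ℕ) ≤ r then K r q else 0)) (n + 1)]
      have h1 : ∀ i ∈ Finset.range (n + 1),
          (if i ≤ (p : ℕ) then H p i else 0) * (if (q : ℕ) ≤ i then K i q else 0)
          = if i ∈ Finset.Icc (q : ℕ) (p : ℕ) then H p i * K i q else 0 := by
        intro i _
        by_cases h1 : i ≤ (p : ℕ) <;> by_cases h2 : (q : ℕ) ≤ i <;>
          simp [h1, h2, Finset.mem_Icc]
      rw [Finset.sum_congr rfl h1, Finset.sum_ite_mem]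
      congr 1
      rw [Finset.inter_eq_right]
      intro j hj
      simp [Finset.mem_Icc] at hj ⊢
      omega
    set A : Matrix (Fin (n + 1)) (Fin (n + 1)) ℂ :=
      Matrix.of (fun p q => if (q : ℕ) ≤ (p : ℕ) then F p q else 0) with hA
    set B : Matrix (Fin (n + 1)) (Fin (n + 1)) ℂ :=
      Matrix.of (fun p q => if (q : ℕ) ≤ (p : ℕ) then G p q else 0) with hB
    have hAB : A * B = 1 := by
      ext p q
      rw [Matrix.mul_apply, Matrix.one_apply]
      simp only [hA, hB, Matrix.of_apply]
      by_cases hqp : (q : ℕ) ≤ (p : ℕ)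
      · rw [hconv F G p q hqp, part1 p q hqp]
        simp [Fin.ext_iff]
      · rw [if_neg (by intro h; subst h; exact hqp le_rfl)]
        apply Finset.sum_eq_zero
        intro r _
        rcases le_or_gt (r : ℕ) (p : ℕ) with h1 | h1
        · have h2 : ¬ (q : ℕ) ≤ (r : ℕ) := by omega
          simp [h2]
        · simp [Nat.not_le.mpr h1]
    have hBA : B * A = 1 := mul_eq_one_comm.mp hAB
    have hentry := congrFun (congrFun hBA ⟨n, by omega⟩) ⟨k, by omega⟩
    rw [Matrix.mul_apply, Matrix.one_apply] at hentry
    simp only [hA, hB, Matrix.of_apply] at hentry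
    rw [hconv G F ⟨n, by omega⟩ ⟨k, by omega⟩ (by simpa using hkn)] at hentry
    simpa [Fin.ext_iff] using hentry
  exact fun n k hkn => ⟨part1 n k hkn, part2 n k hkn⟩
end

section
/- Let q ∈ ℂ with 0 < |q| < 1, let m, n ∈ ℕ, and let a, b, c ∈ ℂ with a, b, c ≠ 0, such that |b q^{-m-n}/c| < 1 and all factors appearing in denominators below are nonzero (in particular a, c ∉ {q^{-k} : k ≥ 1}). Then ∑_{k=0}^{∞} (c/b, a q^{1+m}, c q^{1+n};q)_k / ((q, aq, cq;q)_k) · (b q^{-m-n}/c)^k = 0. -/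
/-- The q-Pochhammer symbol `(a;q)_n = ∏_{i=0}^{n-1} (1 - a q^i)`. -/
noncomputable def qPoch (q a : ℂ) (n : ℕ) : ℂ := ∏ i ∈ Finset.range n, (1 - a * q ^ i)
open Finset Complex

lemma qPoch_zero (q x : ℂ) : qPoch q x 0 = 1 := by simp [qPoch]

lemma qPoch_succ (q x : ℂ) (k : ℕ) :
    qPoch q x (k + 1) = qPoch q x k * (1 - x * q ^ k) := Finset.prod_range_succ _ _

lemma qPoch_add (q x : ℂ) (m k : ℕ) :
    qPoch q x (m + k) = qPoch q x m * qPoch q (x * q ^ m) k := by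
  unfold qPoch
  rw [Finset.prod_range_add]
  congr 1
  refine Finset.prod_congr rfl fun i _ => ?_
  ring

lemma qPoch_q_ne_zero {q : ℂ} (hq : ‖q‖ < 1) (k : ℕ) : qPoch q q k ≠ 0 := by
  unfold qPoch
  refine Finset.prod_ne_zero_iff.2 fun i _ => ?_
  intro h
  have h1 : q * q ^ i = 1 := by linear_combination -h
  have h2 : ‖q * q ^ i‖ < 1 := by
    rw [norm_mul, norm_pow]
    calc ‖q‖ * ‖q‖ ^ i ≤ ‖q‖ * 1 := by
          exact mul_le_mul_of_nonneg_left (pow_le_one₀ (norm_nonneg q) hq.le)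
            (norm_nonneg q)
      _ < 1 := by simpa using hq
  rw [h1] at h2
  simp at h2

lemma geom_bound {r : ℝ} (h0 : 0 ≤ r) (h1 : r < 1) (k : ℕ) :
    ∑ i ∈ Finset.range k, r ^ i ≤ (1 - r)⁻¹ := by
  have := Summable.sum_le_tsum (Finset.range k) (fun i _ => pow_nonneg h0 i)
    (summable_geometric_of_lt_one h0 h1)
  rwa [tsum_geometric_of_lt_one h0 h1] at this

lemma exp_aux {r t : ℝ} (ht0 : 0 ≤ t) (htr : t ≤ r) (hr : r < 1) :
    Real.exp (-(t / (1 - r))) ≤ 1 - t := by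
  have h1r : 0 < 1 - r := by linarith
  have h1t : 0 < 1 - t := by linarith
  rw [Real.exp_neg, inv_le_comm₀ (Real.exp_pos _) h1t]
  calc (1 - t)⁻¹ = 1 + t / (1 - t) := by field_simp; ring
    _ ≤ 1 + t / (1 - r) := by
        have : t / (1 - t) ≤ t / (1 - r) :=
          div_le_div_of_nonneg_left ht0 h1r (by linarith)
        linarith
    _ ≤ Real.exp (t / (1 - r)) := by
        have := Real.add_one_le_exp (t / (1 - r)); linarith

lemma qPoch_abs_le {q : ℂ} (hq : ‖q‖ < 1) (x : ℂ) (k : ℕ) :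
    ‖qPoch q x k‖ ≤ Real.exp (‖x‖ / (1 - ‖q‖)) := by
  unfold qPoch
  rw [norm_prod]
  calc (∏ i ∈ Finset.range k, ‖1 - x * q ^ i‖)
      ≤ ∏ i ∈ Finset.range k, Real.exp (‖x‖ * ‖q‖ ^ i) := by
        refine Finset.prod_le_prod (fun i _ => norm_nonneg _) (fun i _ => ?_)
        calc ‖1 - x * q ^ i‖ ≤ ‖(1:ℂ)‖ + ‖x * q ^ i‖ := by
              simpa using norm_sub_le (1:ℂ) (x * q ^ i)
          _ = 1 + ‖x‖ * ‖q‖ ^ i := by simp [norm_mul, norm_pow]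
          _ ≤ Real.exp (‖x‖ * ‖q‖ ^ i) := by
              have := Real.add_one_le_exp (‖x‖ * ‖q‖ ^ i)
              linarith
    _ = Real.exp (∑ i ∈ Finset.range k, ‖x‖ * ‖q‖ ^ i) := by
        rw [Real.exp_sum]
    _ ≤ Real.exp (‖x‖ / (1 - ‖q‖)) := by
        apply Real.exp_le_exp.2
        rw [← Finset.mul_sum, div_eq_mul_inv]
        exact mul_le_mul_of_nonneg_left (geom_bound (norm_nonneg q) hq k)
          (norm_nonneg x)

lemma qPoch_q_abs_ge {q : ℂ} (hq : ‖q‖ < 1) (k : ℕ) :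
    Real.exp (-(‖q‖ / (1 - ‖q‖) ^ 2)) ≤ ‖qPoch q q k‖ := by
  unfold qPoch
  rw [norm_prod]
  have hq0 : (0:ℝ) ≤ ‖q‖ := norm_nonneg q
  have h1q : 0 < 1 - ‖q‖ := by linarith
  calc Real.exp (-(‖q‖ / (1 - ‖q‖) ^ 2))
      ≤ Real.exp (-∑ i ∈ Finset.range k, ‖q‖ * ‖q‖ ^ i / (1 - ‖q‖)) := by
        apply Real.exp_le_exp.2
        rw [neg_le_neg_iff]
        calc ∑ i ∈ Finset.range k, ‖q‖ * ‖q‖ ^ i / (1 - ‖q‖)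
            = (‖q‖ / (1 - ‖q‖)) * ∑ i ∈ Finset.range k, ‖q‖ ^ i := by
              rw [Finset.mul_sum]; exact Finset.sum_congr rfl fun i _ => by ring
          _ ≤ (‖q‖ / (1 - ‖q‖)) * (1 - ‖q‖)⁻¹ :=
              mul_le_mul_of_nonneg_left (geom_bound hq0 hq k) (by positivity)
          _ = ‖q‖ / (1 - ‖q‖) ^ 2 := by
              rw [sq]; field_simp
    _ = ∏ i ∈ Finset.range k, Real.exp (-(‖q‖ * ‖q‖ ^ i / (1 - ‖q‖))) := by
        rw [← Real.exp_sum, ← Finset.sum_neg_distrib]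
    _ ≤ ∏ i ∈ Finset.range k, ‖1 - q * q ^ i‖ := by
        refine Finset.prod_le_prod (fun i _ => (Real.exp_pos _).le) (fun i _ => ?_)
        have ht0 : (0:ℝ) ≤ ‖q‖ * ‖q‖ ^ i := by positivity
        have htq : ‖q‖ * ‖q‖ ^ i ≤ ‖q‖ := by
          calc ‖q‖ * ‖q‖ ^ i ≤ ‖q‖ * 1 :=
                mul_le_mul_of_nonneg_left (pow_le_one₀ hq0 hq.le) hq0
            _ = ‖q‖ := by ring
        refine le_trans (exp_aux ht0 htq hq) ?_
        have h2 : ‖q * q ^ i‖ = ‖q‖ * ‖q‖ ^ i := by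
          rw [norm_mul, norm_pow]
        calc 1 - ‖q‖ * ‖q‖ ^ i
            = ‖(1:ℂ)‖ - ‖q * q ^ i‖ := by rw [h2]; simp
          _ ≤ ‖1 - q * q ^ i‖ := by
              have := norm_sub_norm_le (1:ℂ) (q * q ^ i)
              simpa using this

section Engine
variable {q : ℂ} (hq : ‖q‖ < 1)

lemma summable_u (hq : ‖q‖ < 1) (a w : ℂ) (hw : ‖w‖ < 1) :
    Summable (fun k => qPoch q a k / qPoch q q k * w ^ k) := by
  set C := Real.exp (‖a‖ / (1 - ‖q‖))
  set D := Real.exp (-(‖q‖ / (1 - ‖q‖) ^ 2))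
  have hD : 0 < D := Real.exp_pos _
  apply Summable.of_norm
  have hg : Summable (fun k : ℕ => (C / D) * ‖w‖ ^ k) :=
    (summable_geometric_of_lt_one (norm_nonneg w) hw).mul_left _
  refine Summable.of_nonneg_of_le (fun k => norm_nonneg _) (fun k => ?_) hg
  have : ‖qPoch q a k / qPoch q q k * w ^ k‖
      = ‖qPoch q a k‖ / ‖qPoch q q k‖ * ‖w‖ ^ k := by
    simp [norm_div, norm_mul, norm_pow]
  rw [this]
  have h1 : ‖qPoch q a k‖ / ‖qPoch q q k‖ ≤ C / D := by
    apply div_le_div₀ (Real.exp_pos _).le (qPoch_abs_le hq a k) hD (qPoch_q_abs_ge hq k)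
  exact mul_le_mul_of_nonneg_right h1 (pow_nonneg (norm_nonneg w) k)

lemma fe (hq : ‖q‖ < 1) (a w : ℂ) (hw : ‖w‖ < 1) :
    HasSum (fun k => (1 - w) * (qPoch q a k / qPoch q q k * w ^ k)
      - (1 - a * w) * (qPoch q a k / qPoch q q k * (q * w) ^ k)) 0 := by
  set u : ℕ → ℂ := fun k => qPoch q a k / qPoch q q k * w ^ k with hu
  set u' : ℕ → ℂ := fun k => qPoch q a k / qPoch q q k * (q * w) ^ k with hu'
  have hqw : ‖q * w‖ < 1 := by
    rw [norm_mul]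
    calc ‖q‖ * ‖w‖ ≤ 1 * ‖w‖ :=
          mul_le_mul_of_nonneg_right hq.le (norm_nonneg w)
      _ < 1 := by simpa using hw
  have hsu : Summable u := summable_u hq a w hw
  have hsu' : Summable u' := summable_u hq a (q * w) hqw
  set G : ℕ → ℂ := fun k => u k - u' k with hG
  have hrel : ∀ k, u' k = q ^ k * u k := by
    intro k; simp only [hu, hu', mul_pow]; ring
  have hpoint : ∀ k, (1 - w) * u k - (1 - a * w) * u' k = G k - G (k + 1) := by
    intro k
    have hnz : qPoch q q (k + 1) ≠ 0 := qPoch_q_ne_zero hq (k + 1)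
    have hnzk : qPoch q q k ≠ 0 := qPoch_q_ne_zero hq k
    have hfac : (1 - q * q ^ k) ≠ 0 := by
      rw [qPoch_succ] at hnz
      exact (mul_ne_zero_iff.1 hnz).2
    have hstep : (1 - q * q ^ k) * u (k + 1) = (1 - a * q ^ k) * w * u k := by
      simp only [hu, qPoch_succ]
      field_simp
      ring
    have hG1 : G (k + 1) = (1 - q * q ^ k) * u (k + 1) := by
      rw [hG]
      simp only [hrel (k + 1)]
      rw [pow_succ]
      ring
    rw [hG1, hstep, hG, hrel k]
    ring
  have hd : Summable (fun k => (1 - w) * u k - (1 - a * w) * u' k) :=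
    (hsu.mul_left _).sub (hsu'.mul_left _)
  have hGlim : Filter.Tendsto G Filter.atTop (nhds 0) := by
    simpa using hsu.tendsto_atTop_zero.sub hsu'.tendsto_atTop_zero
  have hps := hd.hasSum.tendsto_sum_nat
  have hps2 : Filter.Tendsto (fun n => ∑ k ∈ Finset.range n,
      ((1 - w) * u k - (1 - a * w) * u' k)) Filter.atTop (nhds 0) := by
    have heq : ∀ n, ∑ k ∈ Finset.range n, ((1 - w) * u k - (1 - a * w) * u' k)
        = G 0 - G n := by
      intro n
      rw [← Finset.sum_range_sub' G n]
      exact Finset.sum_congr rfl fun k _ => hpoint k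
    simp only [heq]
    have hG0 : G 0 = 0 := by simp [hG, hu, hu', qPoch_zero]
    rw [hG0]
    simpa using hGlim.neg
  have h2 := hd.hasSum
  rwa [tendsto_nhds_unique hps hps2] at h2

lemma engine (hq0 : q ≠ 0) (hq : ‖q‖ < 1) :
    ∀ (N : ℕ) (a w : ℂ), ‖w‖ < 1 → a * w * q ^ N = 1 →
      HasSum (fun k => qPoch q a k / qPoch q q k * w ^ k) 0 := by
  intro N
  induction N with
  | zero =>
    intro a w hw h
    have haw : 1 - a * w = 0 := by rw [pow_zero, mul_one] at h; rw [h]; ring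
    have hFE := fe hq a w hw
    simp only [haw, zero_mul, sub_zero] at hFE
    have h1w : (1 - w) ≠ 0 := by
      intro h0
      have : w = 1 := by linear_combination -h0
      rw [this] at hw; simp at hw
    have := hFE.mul_left (1 - w)⁻¹
    simp only [← mul_assoc, inv_mul_cancel₀ h1w, one_mul, mul_zero] at this
    exact this
  | succ N ih =>
    intro a w hw h
    have hqw : ‖q * w‖ < 1 := by
      rw [norm_mul]
      calc ‖q‖ * ‖w‖ ≤ 1 * ‖w‖ :=
            mul_le_mul_of_nonneg_right hq.le (norm_nonneg w)
        _ < 1 := by simpa using hw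
    have hih := ih a (q * w) hqw (by rw [← h]; ring)
    have hFE := fe hq a w hw
    have hcomb := hFE.add (hih.mul_left (1 - a * w))
    simp only [sub_add_cancel, add_zero, mul_zero, zero_add] at hcomb
    have h1w : (1 - w) ≠ 0 := by
      intro h0
      have : w = 1 := by linear_combination -h0
      rw [this] at hw; simp at hw
    have := hcomb.mul_left (1 - w)⁻¹
    simp only [← mul_assoc, inv_mul_cancel₀ h1w, one_mul, mul_zero] at this
    exact this

end Engine

lemma hasSum_zero_sum {s : Finset ℕ} {f : ℕ → ℕ → ℂ} (h : ∀ j ∈ s, HasSum (f j) 0) :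
    HasSum (fun k => ∑ j ∈ s, f j k) 0 := by
  classical
  induction s using Finset.induction with
  | empty => simpa using hasSum_zero
  | insert _ _ hx ih =>
    rename_i j s
    simp only [Finset.sum_insert hx]
    have := (h j (Finset.mem_insert_self j s)).add (ih fun i hi => h i (Finset.mem_insert_of_mem hi))
    simpa using this


/-- The vanishing ₃φ₂ sum: the special case `(y, z) = (a q^{1+m}, c q^{1+n})` of the dual
form of the big q-Jacobi orthogonality. -/
theorem vanishing_3phi2 (q a b c : ℂ) (m n : ℕ)
    (hq0 : 0 < ‖q‖) (hq1 : ‖q‖ < 1)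
    (ha : a ≠ 0) (hb : b ≠ 0) (hc : c ≠ 0)
    (harg : ‖b * q ^ (-(m : ℤ) - n) / c‖ < 1)
    (hden : ∀ k : ℕ, qPoch q q k ≠ 0 ∧ qPoch q (a * q) k ≠ 0 ∧ qPoch q (c * q) k ≠ 0)
    (haq : ∀ k : ℕ, 1 ≤ k → a ≠ q ^ (-(k : ℤ)))
    (hcq : ∀ k : ℕ, 1 ≤ k → c ≠ q ^ (-(k : ℤ))) :
    HasSum (fun k : ℕ =>
      qPoch q (c / b) k * qPoch q (a * q ^ (1 + m)) k * qPoch q (c * q ^ (1 + n)) k /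
        (qPoch q q k * qPoch q (a * q) k * qPoch q (c * q) k) *
        (b * q ^ (-(m : ℤ) - n) / c) ^ k) 0 := by
  have hqne : q ≠ 0 := by
    intro h; rw [h] at hq0; simp at hq0
  set z : ℂ := b * q ^ (-(m : ℤ) - n) / c with hz
  set P : Polynomial ℂ :=
    (∏ i ∈ Finset.range m, (1 - Polynomial.C (a * q ^ (1 + i)) * Polynomial.X)) *
      (∏ i ∈ Finset.range n, (1 - Polynomial.C (c * q ^ (1 + i)) * Polynomial.X)) with hP
  have hdeg1 : ∀ (x : ℂ) (s : Finset ℕ),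
      (∏ i ∈ s, (1 - Polynomial.C (x * q ^ (1 + i)) * Polynomial.X)).natDegree ≤ s.card := by
    intro x s
    refine (Polynomial.natDegree_prod_le s _).trans ?_
    rw [Finset.card_eq_sum_ones]
    refine Finset.sum_le_sum fun i _ => ?_
    refine (Polynomial.natDegree_sub_le _ _).trans ?_
    simp only [Polynomial.natDegree_one, max_le_iff]
    exact ⟨Nat.zero_le 1, (Polynomial.natDegree_C_mul_le _ _).trans Polynomial.natDegree_X_le⟩
  have hdeg : P.natDegree < m + n + 1 := by
    have := Polynomial.natDegree_mul_le (p := (∏ i ∈ Finset.range m,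
        (1 - Polynomial.C (a * q ^ (1 + i)) * Polynomial.X)))
      (q := (∏ i ∈ Finset.range n, (1 - Polynomial.C (c * q ^ (1 + i)) * Polynomial.X)))
    have h1 := hdeg1 a (Finset.range m)
    have h2 := hdeg1 c (Finset.range n)
    simp only [Finset.card_range] at h1 h2
    rw [← hP] at this
    omega
  have hevalq : ∀ k : ℕ, P.eval (q ^ k)
      = qPoch q (a * q ^ (1 + k)) m * qPoch q (c * q ^ (1 + k)) n := by
    intro k
    rw [hP]
    simp only [Polynomial.eval_mul, Polynomial.eval_prod, Polynomial.eval_sub,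
      Polynomial.eval_one, Polynomial.eval_mul, Polynomial.eval_C, Polynomial.eval_X]
    unfold qPoch
    congr 1 <;> refine Finset.prod_congr rfl fun i _ => by ring
  -- the key contiguous identities
  have key : ∀ (x : ℂ) (k : ℕ), qPoch q (x * q ^ (1 + m)) k * qPoch q (x * q) m
      = qPoch q (x * q) k * qPoch q (x * q ^ (1 + k)) m := by
    intro x k
    have e1 : x * q ^ (1 + m) = (x * q) * q ^ m := by ring
    have e2 : x * q ^ (1 + k) = (x * q) * q ^ k := by ring
    rw [e1, e2, mul_comm (qPoch q (x * q * q ^ m) k) (qPoch q (x * q) m), ← qPoch_add,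
      Nat.add_comm, qPoch_add]
  have keyn : ∀ (x : ℂ) (k : ℕ), qPoch q (x * q ^ (1 + n)) k * qPoch q (x * q) n
      = qPoch q (x * q) k * qPoch q (x * q ^ (1 + k)) n := by
    intro x k
    have e1 : x * q ^ (1 + n) = (x * q) * q ^ n := by ring
    have e2 : x * q ^ (1 + k) = (x * q) * q ^ k := by ring
    rw [e1, e2, mul_comm (qPoch q (x * q * q ^ n) k) (qPoch q (x * q) n), ← qPoch_add,
      Nat.add_comm, qPoch_add]
  set D : ℂ := qPoch q (a * q) m * qPoch q (c * q) n with hD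
  have hDm : qPoch q (a * q) m ≠ 0 := (hden m).2.1
  have hDn : qPoch q (c * q) n ≠ 0 := (hden n).2.2
  have hDne : D ≠ 0 := mul_ne_zero hDm hDn
  -- HasSum for each j
  have hz1 : q ^ (-(m : ℤ) - n) * q ^ (m + n) = 1 := by
    rw [← zpow_natCast q (m + n), ← zpow_add₀ hqne]
    have : (-(m : ℤ) - n) + ((m + n : ℕ) : ℤ) = 0 := by push_cast; ring
    rw [this, zpow_zero]
  have hcbz : (c / b) * z = q ^ (-(m : ℤ) - n) := by
    rw [hz]; field_simp
  have hHj : ∀ j ∈ Finset.range (m + n + 1),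
      HasSum (fun k => qPoch q (c / b) k / qPoch q q k * (z * q ^ j) ^ k) 0 := by
    intro j hj
    have hjle : j ≤ m + n := by
      have := Finset.mem_range.1 hj; omega
    have habs : ‖z * q ^ j‖ < 1 := by
      rw [norm_mul, norm_pow]
      calc ‖z‖ * ‖q‖ ^ j ≤ ‖z‖ * 1 :=
            mul_le_mul_of_nonneg_left (pow_le_one₀ (norm_nonneg q) hq1.le)
              (norm_nonneg z)
        _ < 1 := by simpa using harg
    refine engine hqne hq1 (m + n - j) (c / b) (z * q ^ j) habs ?_
    have hpow : (q : ℂ) ^ j * q ^ (m + n - j) = q ^ (m + n) := by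
      rw [← pow_add, Nat.add_sub_cancel' hjle]
    calc (c / b) * (z * q ^ j) * q ^ (m + n - j)
        = ((c / b) * z) * (q ^ j * q ^ (m + n - j)) := by ring
      _ = q ^ (-(m : ℤ) - n) * q ^ (m + n) := by rw [hcbz, hpow]
      _ = 1 := hz1
  have H : HasSum (fun k => ∑ j ∈ Finset.range (m + n + 1),
      (P.coeff j / D) * (qPoch q (c / b) k / qPoch q q k * (z * q ^ j) ^ k)) 0 :=
    hasSum_zero_sum fun j hj => by simpa using (hHj j hj).mul_left (P.coeff j / D)
  refine H.congr_fun fun k => ?_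
  have hQq : qPoch q q k ≠ 0 := (hden k).1
  have hQAq : qPoch q (a * q) k ≠ 0 := (hden k).2.1
  have hQCq : qPoch q (c * q) k ≠ 0 := (hden k).2.2
  have hrhs : ∑ j ∈ Finset.range (m + n + 1),
      (P.coeff j / D) * (qPoch q (c / b) k / qPoch q q k * (z * q ^ j) ^ k)
      = (qPoch q (c / b) k * z ^ k / (qPoch q q k * D)) * P.eval (q ^ k) := by
    rw [Polynomial.eval_eq_sum_range' hdeg, Finset.mul_sum]
    refine Finset.sum_congr rfl fun j _ => ?_
    have hqjk : ((q : ℂ) ^ j) ^ k = (q ^ k) ^ j := by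
      rw [← pow_mul, ← pow_mul, mul_comm]
    rw [mul_pow, hqjk]
    field_simp
  rw [hrhs, hevalq k]
  have big : qPoch q (a * q ^ (1 + m)) k * qPoch q (c * q ^ (1 + n)) k * D
      = (qPoch q (a * q) k * qPoch q (c * q) k)
        * (qPoch q (a * q ^ (1 + k)) m * qPoch q (c * q ^ (1 + k)) n) := by
    rw [hD]
    linear_combination qPoch q (c * q ^ (1 + n)) k * qPoch q (c * q) n * key a k
      + qPoch q (a * q) k * qPoch q (a * q ^ (1 + k)) m * keyn c k
  field_simp
  linear_combination (qPoch q (c / b) k * b ^ k * (q ^ (-(m : ℤ) - n)) ^ k * c⁻¹ ^ k) * big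
    - (qPoch q (c / b) k * b ^ k * (q ^ (-(m : ℤ) - n)) ^ k * c⁻¹ ^ k)
      * qPoch q (a * q ^ (1 + m)) k * qPoch q (c * q ^ (1 + n)) k * hD
end
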